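/- arXiv:2306.10752 — 4 statements merged into one kernel-verified Lean document; each statement's English description precedes it below -/
import Mathlib

section
/- Let g : ℝ^M → ℝ be concave, nondecreasing (componentwise), and suppose sup_{α ∈ ℝ^M} g(α) > 0. Then inf { Σ_{m=1}^M α^m : α ∈ ℝ^M, g(α) > 0 } = inf { Σ_{m=1}^M α^m : α ∈ ℝ^M, g(α) ≥ 0 }. -/
lemma ereal_le_of_forall_eps (x : EReal) (c : ℝ)
    (h : ∀ ε : ℝ, 0 < ε → x ≤ ((c + ε : ℝ) : EReal)) : x ≤ (c : EReal) := by
  by_contra hlt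
  push_neg at hlt
  obtain ⟨r, hr1, hr2⟩ := EReal.exists_between_coe_real hlt
  have hc : c < r := by exact_mod_cast hr1
  have := h (r - c) (by linarith)
  rw [show c + (r - c) = r by ring] at this
  exact absurd (this.trans_lt hr2) (lt_irrefl _)

theorem stmt9 (M : ℕ) (hM : 0 < M) (g : (Fin M → ℝ) → ℝ)
    (hg : ConcaveOn ℝ Set.univ g) (hmono : Monotone g)
    (hsup : (0 : EReal) < ⨆ α : Fin M → ℝ, (g α : EReal)) :
    sInf ((fun α : Fin M → ℝ => ((∑ m, α m : ℝ) : EReal)) '' {α | 0 < g α})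
      = sInf ((fun α : Fin M → ℝ => ((∑ m, α m : ℝ) : EReal)) '' {α | 0 ≤ g α}) := by
  obtain ⟨α₀, hα₀⟩ : ∃ α₀, 0 < g α₀ := by
    rw [lt_iSup_iff] at hsup
    obtain ⟨α₀, h⟩ := hsup
    exact ⟨α₀, by exact_mod_cast h⟩
  refine le_antisymm (le_sInf ?_) (sInf_le_sInf (Set.image_mono fun α (hα : 0 < g α) => le_of_lt hα))
  rintro _ ⟨α, hα, rfl⟩
  rcases lt_or_eq_of_le (show (0:ℝ) ≤ g α from hα) with h | h
  · exact sInf_le ⟨α, h, rfl⟩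
  · -- g α = 0; move towards α₀
    apply ereal_le_of_forall_eps
    intro ε hε
    set C := ∑ m, α₀ m - ∑ m, α m with hC
    set t : ℝ := min 1 (ε / (|C| + 1)) with ht
    have habs : (0:ℝ) < |C| + 1 := by positivity
    have ht0 : 0 < t := lt_min one_pos (by positivity)
    have ht1 : t ≤ 1 := min_le_left _ _
    set β : Fin M → ℝ := (1 - t) • α + t • α₀ with hβ
    have hgβ : 0 < g β := by
      have := hg.2 (Set.mem_univ α) (Set.mem_univ α₀) (by linarith : (0:ℝ) ≤ 1 - t)
        (le_of_lt ht0) (by ring)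
      have : (1 - t) * g α + t * g α₀ ≤ g β := this
      rw [← h] at this
      nlinarith
    have hsum : ∑ m, β m = ∑ m, α m + t * C := by
      simp only [hβ, Pi.add_apply, Pi.smul_apply, smul_eq_mul, Finset.sum_add_distrib,
        ← Finset.mul_sum, hC]
      ring
    have htC : t * C ≤ ε := by
      have h1 : t ≤ ε / (|C| + 1) := min_le_right _ _
      have h2 : t * C ≤ t * |C| := by
        have := le_abs_self C
        nlinarith
      have h3 : t * |C| ≤ (ε / (|C| + 1)) * (|C| + 1) := by
        apply mul_le_mul h1 (by linarith [abs_nonneg C]) (abs_nonneg C)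
        positivity
      rw [div_mul_cancel₀ _ (ne_of_gt habs)] at h3
      linarith
    calc sInf ((fun α : Fin M → ℝ => ((∑ m, α m : ℝ) : EReal)) '' {α | 0 < g α})
        ≤ ((∑ m, β m : ℝ) : EReal) := sInf_le ⟨β, hgβ, rfl⟩
      _ ≤ ((∑ m, α m + ε : ℝ) : EReal) := by
          apply EReal.coe_le_coe_iff.mpr
          rw [hsum]; linarith
end

section
/- Let U : ℝ^N → ℝ be strictly concave, strictly increasing componentwise, continuous, and suppose there exist constants a > 0 and b ∈ ℝ with U(x) ≤ a Σⱼ (xⱼ)⁺ − 2a Σⱼ (xⱼ)⁻ + b for all x ∈ ℝ^N. Let π : ℝ^N → ℝ^M be linear with Σ_{m=1}^M π^m(x) = Σ_{j=1}^N xⱼ for all x, and π(ℝ₊^N) = ℝ₊^M. Then for z = 0 ∈ ℝ^M, the supremum (□_π U)(0) = sup { U(x) : π(x) = 0 } is finite and attained by some x∞ ∈ ℝ^N with π(x∞) = 0 and U(x∞) = (□_π U)(0). -/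
theorem stmt15 (N M : ℕ) (hN : 0 < N) (hM : 0 < M)
    (U : (Fin N → ℝ) → ℝ) (hconc : StrictConcaveOn ℝ Set.univ U)
    (hmono : StrictMono U) (hcont : Continuous U)
    (a b : ℝ) (ha : 0 < a)
    (hbound : ∀ x : Fin N → ℝ,
      U x ≤ a * ∑ j, max (x j) 0 - 2 * a * ∑ j, max (-(x j)) 0 + b)
    (π : (Fin N → ℝ) →ₗ[ℝ] (Fin M → ℝ))
    (hsum : ∀ x, ∑ m, π x m = ∑ j, x j)
    (hπ : π '' {x | 0 ≤ x} = {z | 0 ≤ z}) :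
    ∃ xinf : Fin N → ℝ, π xinf = 0 ∧
      sSup ((fun x => (U x : EReal)) '' {x | π x = 0}) = (U xinf : EReal) := by
  have hπc : Continuous ⇑π := LinearMap.continuous_of_finiteDimensional π
  set K : Set (Fin N → ℝ) := {x | π x = 0 ∧ U 0 ≤ U x} with hK
  have h0K : (0 : Fin N → ℝ) ∈ K := ⟨map_zero π, le_refl _⟩
  -- key estimate on K
  have hneg : ∀ x ∈ K, ∑ j, max (-(x j)) 0 ≤ (b - U 0) / a := by
    intro x hx
    have hs : ∑ j, x j = 0 := by
      rw [← hsum x, hx.1]; simp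
    have hpm : ∑ j, max (x j) 0 - ∑ j, max (-(x j)) 0 = ∑ j, x j := by
      rw [← Finset.sum_sub_distrib]
      exact Finset.sum_congr rfl fun j _ => max_zero_sub_eq_self (x j)
    have heq : ∑ j, max (x j) 0 = ∑ j, max (-(x j)) 0 := by linarith [hpm, hs]
    have hb := hbound x
    rw [heq] at hb
    have : a * ∑ j, max (-(x j)) 0 ≤ b - U 0 := by nlinarith [hx.2]
    exact (le_div_iff₀ ha).mpr (by linarith)
  have hRnn : 0 ≤ (b - U 0) / a := by
    have := hneg 0 h0K
    simpa using this
  -- K is bounded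
  have hKsub : K ⊆ Metric.closedBall 0 (2 * ((b - U 0) / a)) := by
    intro x hx
    rw [Metric.mem_closedBall, dist_zero_right]
    rw [pi_norm_le_iff_of_nonneg (by linarith)]
    intro j
    have hs : ∑ j, x j = 0 := by rw [← hsum x, hx.1]; simp
    have hpm : ∑ j, max (x j) 0 - ∑ j, max (-(x j)) 0 = ∑ j, x j := by
      rw [← Finset.sum_sub_distrib]
      exact Finset.sum_congr rfl fun j _ => max_zero_sub_eq_self (x j)
    have habs : ∑ j, |x j| = ∑ j, max (x j) 0 + ∑ j, max (-(x j)) 0 := by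
      rw [← Finset.sum_add_distrib]
      exact Finset.sum_congr rfl fun j _ => (max_zero_add_max_neg_zero_eq_abs_self (x j)).symm
    have h1 : |x j| ≤ ∑ i, |x i| :=
      Finset.single_le_sum (fun i _ => abs_nonneg (x i)) (Finset.mem_univ j)
    have h2 := hneg x hx
    calc ‖x j‖ = |x j| := rfl
      _ ≤ ∑ i, |x i| := h1
      _ = ∑ i, max (x i) 0 + ∑ i, max (-(x i)) 0 := habs
      _ = 2 * ∑ i, max (-(x i)) 0 := by linarith [hpm, hs]
      _ ≤ 2 * ((b - U 0) / a) := by linarith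
  have hKclosed : IsClosed K := by
    have h1 : IsClosed {x : Fin N → ℝ | π x = 0} :=
      isClosed_singleton.preimage hπc
    have h2 : IsClosed {x : Fin N → ℝ | U 0 ≤ U x} :=
      isClosed_le continuous_const hcont
    exact h1.inter h2
  have hKcpt : IsCompact K :=
    (isCompact_closedBall 0 _).of_isClosed_subset hKclosed hKsub
  obtain ⟨xinf, hxinfK, hmax⟩ := hKcpt.exists_isMaxOn ⟨0, h0K⟩ hcont.continuousOn
  refine ⟨xinf, hxinfK.1, ?_⟩
  have hub : ∀ x, π x = 0 → U x ≤ U xinf := by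
    intro x hx
    rcases le_total (U 0) (U x) with h | h
    · exact hmax ⟨hx, h⟩
    · exact h.trans (hmax h0K)
  apply le_antisymm
  · apply sSup_le
    rintro y ⟨x, hx, rfl⟩
    exact EReal.coe_le_coe_iff.mpr (hub x hx)
  · exact le_sSup ⟨xinf, hxinfK.1, rfl⟩
end

section
/- Let f : ℝ^N → ℝ be strictly convex, differentiable, and A ∈ ℝ^{M×N} surjective. Suppose that for some ŷ ∈ ℝ^M the problem inf { f(x) : Ax = ŷ } admits an optimum x̂ with ∇f(x̂) = Aᵀλ̂ for some λ̂ ∈ ℝ^M, and suppose ∇f(ℝ^N) is open with Aᵀλ̂ ∈ ∇f(ℝ^N) ⊆ ri(dom f*). Then for every y ∈ ℝ^M the problem inf { f(x) : Ax = y } admits an optimum. -/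
open Filter Topology

lemma grad_ineq_aux {N : ℕ} {f : (Fin N → ℝ) → ℝ} (hf : ConvexOn ℝ Set.univ f)
    {G : (Fin N → ℝ) → (Fin N → ℝ)}
    (hG : ∀ x, HasFDerivAt f (∑ i, G x i • (ContinuousLinearMap.proj i : (Fin N → ℝ) →L[ℝ] ℝ)) x)
    (z x : Fin N → ℝ) : f z + ∑ i, G z i * (x i - z i) ≤ f x := by
  set v := x - z with hv
  set L : (Fin N → ℝ) →L[ℝ] ℝ := ∑ i, G z i • (ContinuousLinearMap.proj i) with hL
  have hcurve : HasDerivAt (fun t : ℝ => z + t • v) v 0 := by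
    simpa using ((hasDerivAt_id (0:ℝ)).smul_const v).const_add z
  have h1 : HasDerivAt (fun t : ℝ => f (z + t • v)) (L v) 0 := by
    exact HasFDerivAt.comp_hasDerivAt 0 (by simpa using hG z) hcurve
  have hslope : Tendsto (slope (fun t : ℝ => f (z + t • v)) 0) (𝓝[>] 0) (𝓝 (L v)) := by
    have := (h1.hasDerivWithinAt (s := Set.Ioi 0))
    rw [hasDerivWithinAt_iff_tendsto_slope] at this
    simpa using this.mono_left (nhdsWithin_mono _ (fun a ha => ⟨ha, by simpa using ha.ne'⟩))
  have hbound : ∀ᶠ t in 𝓝[>] (0:ℝ), slope (fun t : ℝ => f (z + t • v)) 0 t ≤ f x - f z := by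
    filter_upwards [Ioo_mem_nhdsGT_of_mem (by norm_num : (0:ℝ) ∈ Set.Ico 0 1)] with t ht
    have h2 := hf.2 (Set.mem_univ z) (Set.mem_univ x) (by linarith [ht.2] : (0:ℝ) ≤ 1 - t)
      (le_of_lt ht.1) (by ring)
    have heq : (1 - t) • z + t • x = z + t • v := by
      rw [hv]; module
    rw [heq] at h2
    have ht0 : (0:ℝ) < t := ht.1
    rw [slope_def_field]
    simp only [zero_smul, add_zero, sub_zero, smul_eq_mul] at h2 ⊢
    rw [div_le_iff₀ ht0]
    nlinarith [h2]
  have hle : L v ≤ f x - f z := le_of_tendsto hslope hbound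
  have hLv : L v = ∑ i, G z i * (x i - z i) := by
    simp [hL, ContinuousLinearMap.sum_apply, hv]
  linarith [hle, hLv.symm.le, hLv.le]

theorem stmt16 (N M : ℕ) (hN : 0 < N) (hM : 0 < M)
    (f : (Fin N → ℝ) → ℝ) (hf : StrictConvexOn ℝ Set.univ f)
    (G : (Fin N → ℝ) → (Fin N → ℝ))
    (hG : ∀ x, HasFDerivAt f
      (∑ i, G x i • (ContinuousLinearMap.proj i : (Fin N → ℝ) →L[ℝ] ℝ)) x)
    (A : Matrix (Fin M) (Fin N) ℝ) (hA : Function.Surjective A.mulVec)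
    (yhat : Fin M → ℝ) (xhat : Fin N → ℝ) (lam : Fin M → ℝ)
    (hfeas : A.mulVec xhat = yhat)
    (hopt : ∀ x, A.mulVec x = yhat → f xhat ≤ f x)
    (hlag : G xhat = A.transpose.mulVec lam)
    (hopen : IsOpen (Set.range G))
    (hsub : Set.range G ⊆ intrinsicInterior ℝ
      {w : Fin N → ℝ | (⨆ x : Fin N → ℝ, (((∑ i, x i * w i) - f x : ℝ) : EReal)) < ⊤}) :
    ∀ y : Fin M → ℝ, ∃ x : Fin N → ℝ, A.mulVec x = y ∧
      ∀ x', A.mulVec x' = y → f x ≤ f x' := by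
  intro y
  obtain ⟨x0, hx0⟩ := hA y
  have hfc : Continuous f := by
    rw [continuous_iff_continuousAt]
    exact fun x => (hG x).differentiableAt.continuousAt
  have hAc : Continuous A.mulVec := by
    have : (A.mulVecLin : (Fin N → ℝ) →ₗ[ℝ] (Fin M → ℝ)).toFun = A.mulVec := rfl
    exact A.mulVecLin.continuous_of_finiteDimensional
  set K := {x : Fin N → ℝ | A.mulVec x = y ∧ f x ≤ f x0} with hKdef
  have hx0K : x0 ∈ K := ⟨hx0, le_refl _⟩
  have hKc : IsClosed K := (isClosed_eq hAc continuous_const).inter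
    (isClosed_le hfc continuous_const)
  have hKb : Bornology.IsBounded K := by
    by_contra hub
    have hseq : ∀ n : ℕ, ∃ u, u ∈ K ∧ (n : ℝ) + ‖x0‖ < ‖u‖ := by
      intro n
      by_contra hc
      push_neg at hc
      exact hub ((Metric.isBounded_closedBall (x := (0 : Fin N → ℝ))
        (r := (n : ℝ) + ‖x0‖)).subset
        (fun u hu => mem_closedBall_zero_iff.mpr (hc u hu)))
    choose u huK hun using hseq
    have hune : ∀ n, u n ≠ x0 := by
      intro n h
      have h1 := hun n
      rw [h] at h1
      have h2 : (0:ℝ) ≤ (n:ℝ) := Nat.cast_nonneg n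
      linarith
    set r : ℕ → ℝ := fun n => ‖u n - x0‖ with hrdef
    have hrpos : ∀ n, 0 < r n := fun n => norm_pos_iff.mpr (sub_ne_zero.mpr (hune n))
    have hrge : ∀ n : ℕ, (n : ℝ) < r n := by
      intro n
      have h2 := hun n
      calc (n:ℝ) < ‖u n‖ - ‖x0‖ := by linarith
        _ ≤ ‖u n - x0‖ := norm_sub_norm_le _ _
    set ds : ℕ → (Fin N → ℝ) := fun n => (r n)⁻¹ • (u n - x0) with hdsdef
    have hds1 : ∀ n, ds n ∈ Metric.sphere (0 : Fin N → ℝ) 1 := by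
      intro n
      simp only [mem_sphere_zero_iff_norm, hdsdef, norm_smul, norm_inv, norm_norm]
      rw [Real.norm_eq_abs, abs_of_pos (hrpos n)]
      exact inv_mul_cancel₀ (ne_of_gt (hrpos n))
    obtain ⟨d, hd, φ, hφ, hconv⟩ :=
      (isCompact_sphere (0 : Fin N → ℝ) 1).tendsto_subseq hds1
    have hdnorm : ‖d‖ = 1 := mem_sphere_zero_iff_norm.mp hd
    have hAd : A.mulVec d = 0 := by
      have hz : ∀ n, A.mulVec (ds n) = 0 := by
        intro n
        have : A.mulVec (ds n) = (r n)⁻¹ • (A.mulVec (u n) - A.mulVec x0) := by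
          rw [hdsdef]
          simp [Matrix.mulVec_smul, Matrix.mulVec_sub]
        rw [this, (huK n).1, hx0, sub_self, smul_zero]
      have h1 : Filter.Tendsto (fun k => A.mulVec (ds (φ k))) Filter.atTop (𝓝 (A.mulVec d)) :=
        (hAc.tendsto d).comp hconv
      have h2 : (fun k => A.mulVec (ds (φ k))) = fun _ => (0 : Fin M → ℝ) := by
        funext k; exact hz (φ k)
      rw [h2] at h1
      exact (tendsto_nhds_unique tendsto_const_nhds h1).symm
    -- f bounded along the ray
    have hray : ∀ t : ℝ, 0 ≤ t → f (x0 + t • d) ≤ f x0 := by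
      intro t ht
      have htend : Filter.Tendsto (fun k => f (x0 + t • ds (φ k))) Filter.atTop
          (𝓝 (f (x0 + t • d))) :=
        (hfc.tendsto _).comp ((tendsto_const_nhds.add (hconv.const_smul t)))
      refine le_of_tendsto htend ?_
      filter_upwards [Filter.eventually_ge_atTop (Nat.ceil t)] with k hk
      set n := φ k with hn
      have hrt : t ≤ r n := by
        have h1 : (k : ℝ) ≤ (n : ℝ) := by exact_mod_cast Nat.cast_le.mpr (hφ.le_apply)
        have h2 : t ≤ (k : ℝ) := le_trans (Nat.le_ceil t) (by exact_mod_cast hk)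
        linarith [hrge n]
      set s := t / r n with hs
      have hs0 : 0 ≤ s := div_nonneg ht (le_of_lt (hrpos n))
      have hs1 : s ≤ 1 := (div_le_one (hrpos n)).mpr hrt
      have heq : x0 + t • ds n = (1 - s) • x0 + s • u n := by
        rw [hdsdef, hs]
        rw [smul_smul]
        rw [show t * (r n)⁻¹ = t / r n from (div_eq_mul_inv t (r n)).symm]
        module
      rw [heq]
      have := hf.convexOn.2 (Set.mem_univ x0) (Set.mem_univ (u n))
        (by linarith : (0:ℝ) ≤ 1 - s) hs0 (by ring)
      simp only [smul_eq_mul] at this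
      nlinarith [(huK n).2, this]
    -- contradiction via gradient at w = G xhat + (ε/2) d
    obtain ⟨ε, hε, hball⟩ := Metric.isOpen_iff.mp hopen (G xhat) ⟨xhat, rfl⟩
    set w := G xhat + (ε/2) • d with hwdef
    have hwmem : w ∈ Set.range G := by
      apply hball
      rw [Metric.mem_ball, dist_eq_norm]
      have : w - G xhat = (ε/2) • d := by rw [hwdef]; abel
      rw [this, norm_smul, hdnorm, Real.norm_eq_abs, abs_of_pos (by linarith)]
      linarith
    obtain ⟨z, hz⟩ := hwmem
    set c := ∑ i, d i * d i with hcdef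
    have hc0 : 0 < c := by
      have hdne : d ≠ 0 := by
        intro h; rw [h, norm_zero] at hdnorm; norm_num at hdnorm
      obtain ⟨i, hi⟩ := Function.ne_iff.mp hdne
      refine Finset.sum_pos' (fun j _ => mul_self_nonneg _) ⟨i, Finset.mem_univ i, ?_⟩
      exact mul_self_pos.mpr (by simpa using hi)
    have hwd : ∑ i, w i * d i = ε/2 * c := by
      have h0 : ∑ i, (A.transpose.mulVec lam) i * d i = 0 := by
        have e1 : ∑ i, (A.transpose.mulVec lam) i * d i
            = dotProduct (A.transpose.mulVec lam) d := rfl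
        rw [e1, Matrix.mulVec_transpose, ← Matrix.dotProduct_mulVec, hAd,
          dotProduct_zero]
      calc ∑ i, w i * d i = ∑ i, ((A.transpose.mulVec lam) i * d i + ε/2 * (d i * d i)) := by
            refine Finset.sum_congr rfl (fun i _ => ?_)
            simp only [hwdef, Pi.add_apply, Pi.smul_apply, smul_eq_mul, hlag]
            ring
        _ = (∑ i, (A.transpose.mulVec lam) i * d i) + ε/2 * ∑ i, d i * d i := by
            rw [Finset.sum_add_distrib, Finset.mul_sum]
        _ = ε/2 * c := by rw [h0, hcdef]; ring
    set C0 := ∑ i, w i * (x0 i - z i) with hC0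
    have hgrad : ∀ t : ℝ, 0 ≤ t → f z + C0 + t * (ε/2 * c) ≤ f x0 := by
      intro t ht
      have h1 := grad_ineq_aux hf.convexOn hG z (x0 + t • d)
      rw [hz] at h1
      have h2 : ∑ i, w i * ((x0 + t • d) i - z i) = C0 + t * ∑ i, w i * d i := by
        rw [hC0, Finset.mul_sum, ← Finset.sum_add_distrib]
        refine Finset.sum_congr rfl (fun i _ => ?_)
        simp only [Pi.add_apply, Pi.smul_apply, smul_eq_mul]
        ring
      rw [h2, hwd] at h1
      linarith [hray t ht]
    have hpos : 0 < ε/2 * c := by positivity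
    set T := max 0 ((f x0 + 1 - f z - C0) / (ε/2 * c)) with hT
    have hT0 : 0 ≤ T := le_max_left _ _
    have := hgrad T hT0
    have hTge : (f x0 + 1 - f z - C0) / (ε/2 * c) ≤ T := le_max_right _ _
    have : f x0 + 1 - f z - C0 ≤ T * (ε/2 * c) := by
      rw [div_le_iff₀ hpos] at hTge
      linarith
    linarith [hgrad T hT0]
  have hKcpt : IsCompact K := Metric.isCompact_of_isClosed_isBounded hKc hKb
  obtain ⟨x, hxK, hxmin⟩ := hKcpt.exists_isMinOn ⟨x0, hx0K⟩ hfc.continuousOn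
  refine ⟨x, hxK.1, fun x' hx' => ?_⟩
  by_cases h : f x' ≤ f x0
  · exact hxmin ⟨hx', h⟩
  · exact le_trans (hxmin hx0K) (le_of_not_ge h)
end

section
/- Let U : ℝ^N → ℝ be concave and, for every x ∈ ℝ^N, strictly increasing in at least one component (i.e. there exists j with t ↦ U(x + t eⱼ) strictly increasing). Let π : ℝ^N → ℝ^M be linear with π(ℝ₊^N) = ℝ₊^M, and let X ∈ ℝ^N. Then inf { Σ_m π^m(y) : y ∈ ℝ^N, U(X + y) ≥ 0 } = inf { Σ_m π^m(y) : y ∈ ℝ^N, U(X + y) > 0 }. -/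
theorem stmt17 (N M : ℕ) (hN : 0 < N) (hM : 0 < M)
    (U : (Fin N → ℝ) → ℝ) (hU : ConcaveOn ℝ Set.univ U)
    (hstr : ∀ x : Fin N → ℝ, ∃ j : Fin N,
      StrictMono fun t : ℝ => U (x + t • (Pi.single j (1 : ℝ) : Fin N → ℝ)))
    (π : (Fin N → ℝ) →ₗ[ℝ] (Fin M → ℝ))
    (hπ : π '' {x | 0 ≤ x} = {z | 0 ≤ z})
    (X : Fin N → ℝ) :
    sInf ((fun y : Fin N → ℝ => ((∑ m, π y m : ℝ) : EReal)) '' {y | 0 ≤ U (X + y)})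
      = sInf ((fun y : Fin N → ℝ => ((∑ m, π y m : ℝ) : EReal)) '' {y | 0 < U (X + y)}) := by
  apply le_antisymm
  · exact sInf_le_sInf (Set.image_mono fun y (hy : 0 < U (X + y)) => le_of_lt hy)
  · refine le_sInf ?_
    rintro _ ⟨y, hy, rfl⟩
    obtain ⟨j, hj⟩ := hstr (X + y)
    set e : Fin N → ℝ := Pi.single j 1 with he
    have he0 : (0 : Fin N → ℝ) ≤ e := by
      intro i
      by_cases h : i = j
      · subst h; simp [he]
      · simp [he, Pi.single_apply, h]
    have hπe : 0 ≤ π e := by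
      have : π e ∈ π '' {x | 0 ≤ x} := ⟨e, he0, rfl⟩
      rw [hπ] at this; exact this
    set C : ℝ := ∑ m, π e m with hC
    have hC0 : 0 ≤ C := Finset.sum_nonneg fun m _ => hπe m
    set a : ℝ := ∑ m, π y m with ha
    have key : ∀ t : ℝ, 0 < t →
        sInf ((fun y : Fin N → ℝ => ((∑ m, π y m : ℝ) : EReal)) '' {y | 0 < U (X + y)})
          ≤ ((a + t * C : ℝ) : EReal) := by
      intro t ht
      have hmem : y + t • e ∈ {y | 0 < U (X + y)} := by
        have h2 : U ((X + y) + (0:ℝ) • e) < U ((X + y) + t • e) := hj ht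
        simp only [zero_smul, add_zero] at h2
        have : X + (y + t • e) = (X + y) + t • e := by abel
        simp only [Set.mem_setOf_eq, this]
        exact lt_of_le_of_lt hy h2
      have hval : (∑ m, π (y + t • e) m : ℝ) = a + t * C := by
        simp only [map_add, map_smul, Pi.add_apply, Pi.smul_apply, smul_eq_mul,
          Finset.sum_add_distrib, ha, hC, Finset.mul_sum]
      have := sInf_le (Set.mem_image_of_mem (fun y : Fin N → ℝ => ((∑ m, π y m : ℝ) : EReal)) hmem)
      simp only [hval] at this; exact this
    by_contra hlt
    push_neg at hlt
    obtain ⟨r, har, hrs⟩ := EReal.lt_iff_exists_real_btwn.mp hlt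
    have hra : a < r := by exact_mod_cast har
    set t : ℝ := (r - a) / (C + 1) with htdef
    have ht : 0 < t := div_pos (by linarith) (by linarith)
    have hbound : a + t * C < r := by
      have h1 : t * C < r - a := by
        have : t * (C + 1) = r - a := by
          rw [htdef]; exact div_mul_cancel₀ _ (ne_of_gt (by linarith))
        nlinarith
      linarith
    have := key t ht
    have h2 : ((a + t * C : ℝ) : EReal) < (r : EReal) := by exact_mod_cast hbound
    exact absurd (lt_of_le_of_lt this h2) (not_lt.mpr (le_of_lt hrs))
end
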